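/- If a linear homogeneous equation c₁x₁ + ⋯ + cₘxₘ = 0 with nonzero integer coefficients has a nonempty subset of its coefficients summing to zero, then for every k ≥ 1 and every k-coloring of the positive integers there is a monochromatic positive-integer solution (i.e., the equation is regular). -/

import Mathlib

open Filter

/-- Compactness: an "infinite" triple statement implies a bounded version. -/
lemma rado_compact (p q k : ℕ)
    (I : ∀ χ : ℕ → Fin k, ∃ y w, 0 < y ∧ 0 < w ∧ χ y = χ (y + p*w) ∧ χ y = χ (q*w)) :
    ∃ N, ∀ χ : ℕ → Fin k, ∃ y w, 0 < y ∧ 0 < w ∧ y + p*w ≤ N ∧ q*w ≤ N ∧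
      χ y = χ (y + p*w) ∧ χ y = χ (q*w) := by
  by_contra h
  push_neg at h
  choose χs hχs using h
  set U : Ultrafilter ℕ := Ultrafilter.of atTop with hU
  have hUle : (U : Filter ℕ) ≤ atTop := Ultrafilter.of_le _
  have hlim : ∀ n, ∃ c : Fin k, {N | χs N n = c} ∈ U := by
    intro n
    obtain ⟨a, ha⟩ := Ultrafilter.eq_pure_of_finite (U.map (fun N => χs N n))
    refine ⟨a, ?_⟩
    have : {a} ∈ U.map (fun N => χs N n) := by rw [ha]; exact Filter.mem_pure.2 rfl
    simpa [Ultrafilter.mem_map, Set.preimage, Set.mem_singleton_iff] using this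
  choose χstar hχstar using hlim
  obtain ⟨y, w, hy, hw, h1, h2⟩ := I χstar
  have hA : {N | χs N y = χstar y} ∩ {N | χs N (y + p*w) = χstar (y + p*w)} ∩
      {N | χs N (q*w) = χstar (q*w)} ∈ U :=
    Filter.inter_mem (Filter.inter_mem (hχstar _) (hχstar _)) (hχstar _)
  have hB : {N : ℕ | y + p*w ≤ N ∧ q*w ≤ N} ∈ U := by
    apply hUle
    exact (Filter.eventually_ge_atTop (y + p*w)).and (Filter.eventually_ge_atTop (q*w))
  obtain ⟨N, ⟨⟨e1, e2⟩, e3⟩, b1, b2⟩ := Filter.nonempty_of_mem (Filter.inter_mem hA hB)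
  exact hχs N y w hy hw b1 b2 (by rw [e1, e2]; exact h1) (by rw [e1, e3]; exact h2)

/-- Strengthened van der Waerden: monochromatic `y`, `y + p*w`, `q*w`. -/
lemma rado_triple (p q : ℕ) (hp : 0 < p) (hq : 0 < q) :
    ∀ k (χ : ℕ → Fin k), ∃ y w, 0 < y ∧ 0 < w ∧ χ y = χ (y + p*w) ∧ χ y = χ (q*w) := by
  intro k
  induction k with
  | zero => intro χ; exact (χ 1).elim0
  | succ k ih =>
    intro χ
    obtain ⟨N₀, hN₀⟩ := rado_compact p q k ih
    set N := N₀ + 1 with hNdef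
    have hN : ∀ χ' : ℕ → Fin k, ∃ y w, 0 < y ∧ 0 < w ∧ y + p*w ≤ N ∧ q*w ≤ N ∧
        χ' y = χ' (y + p*w) ∧ χ' y = χ' (q*w) := by
      intro χ'
      obtain ⟨y, w, a1, a2, a3, a4, a5, a6⟩ := hN₀ χ'
      exact ⟨y, w, a1, a2, a3.trans (Nat.le_succ _), a4.trans (Nat.le_succ _), a5, a6⟩
    obtain ⟨a, ha, b, c₀, hmono⟩ :=
      Combinatorics.exists_mono_homothetic_copy (Finset.range (N*p+1)) (fun n => χ (n+1))
    set y := b + 1 with hy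
    have hAP : ∀ i, i ≤ N*p → χ (y + a*i) = c₀ := by
      intro i hi
      have := hmono i (Finset.mem_range.2 (Nat.lt_succ_of_le hi))
      simpa [smul_eq_mul, hy, Nat.add_comm, Nat.add_left_comm, Nat.mul_comm, Nat.add_assoc] using this
    have hyc : χ y = c₀ := by simpa using hAP 0 (Nat.zero_le _)
    by_cases hcase : ∃ i, 1 ≤ i ∧ i ≤ N ∧ χ (q*(a*i)) = c₀
    · obtain ⟨i, hi1, hiN, hqc⟩ := hcase
      refine ⟨y, a*i, Nat.succ_pos _, Nat.mul_pos ha hi1, ?_, ?_⟩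
      · have e : y + p*(a*i) = y + a*(i*p) := by ring
        rw [e, hAP (i*p) (Nat.mul_le_mul_right p hiN), hyc]
      · rw [hqc, hyc]
    · push_neg at hcase
      have hk1 : χ (q*(a*1)) ≠ c₀ := hcase 1 le_rfl (by omega)
      have hk : 0 < k := by
        by_contra hk0
        have : k = 0 := by omega
        subst this
        have i1 := (χ (q*(a*1))).isLt
        have i2 := c₀.isLt
        exact hk1 (Fin.ext (by omega))
      set χ'' : ℕ → Fin k := fun n =>
        if h : χ (q*(a*n)) = c₀ then ⟨0, hk⟩ else (Fin.exists_succAbove_eq h).choose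
        with hχ''
      have key : ∀ n, χ (q*(a*n)) ≠ c₀ → c₀.succAbove (χ'' n) = χ (q*(a*n)) := by
        intro n hn
        simp only [hχ'', dif_neg hn]
        exact (Fin.exists_succAbove_eq hn).choose_spec
      obtain ⟨y', w', b1, b2, b3, b4, b5, b6⟩ := hN χ''
      have hy'N : y' ≤ N := le_trans (Nat.le_add_right _ _) b3
      have c1 : χ (q*(a*y')) = χ (q*(a*(y' + p*w'))) := by
        rw [← key y' (hcase y' b1 hy'N), ← key (y' + p*w') (hcase _ (by omega) b3), b5]
      have c2 : χ (q*(a*y')) = χ (q*(a*(q*w'))) := by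
        rw [← key y' (hcase y' b1 hy'N),
          ← key (q*w') (hcase _ (Nat.mul_pos hq b2) b4), b6]
      refine ⟨q*(a*y'), q*(a*w'), by positivity, by positivity, ?_, ?_⟩
      · have e : q*(a*y') + p*(q*(a*w')) = q*(a*(y' + p*w')) := by ring
        rw [e]; exact c1
      · have e : q*(q*(a*w')) = q*(a*(q*w')) := by ring
        rw [e]; exact c2

/-- Rado ('if' direction): if a nonempty subset of the coefficients of
`c₁x₁ + ⋯ + cₘxₘ = 0` sums to zero, the equation is regular. -/
theorem stmt_15 (m : ℕ) (c : Fin m → ℤ) (hc : ∀ i, c i ≠ 0)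
    (hsub : ∃ s : Finset (Fin m), s.Nonempty ∧ (∑ i ∈ s, c i) = 0) :
    ∀ k : ℕ, 1 ≤ k → ∀ χ : ℕ → Fin k, ∃ x : Fin m → ℕ,
      (∀ i, 0 < x i) ∧ (∑ i, c i * (x i : ℤ)) = 0 ∧
      (∀ i j : Fin m, χ (x i) = χ (x j)) := by
  obtain ⟨s, hsne, hssum⟩ := hsub
  intro k hk χ
  set B : ℤ := ∑ i ∈ sᶜ, c i with hB
  have htotal : ∑ i ∈ s, c i + ∑ i ∈ sᶜ, c i = ∑ i, c i := Finset.sum_add_sum_compl s c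
  by_cases hB0 : B = 0
  · refine ⟨fun _ => 1, fun _ => one_pos, ?_, fun _ _ => rfl⟩
    have : ∑ i, c i = 0 := by rw [← htotal, hssum, ← hB, hB0, add_zero]
    simpa using this
  · -- `s` contains coefficients of both signs
    have hposneg : (∃ j ∈ s, 0 < c j) ∧ (∃ j ∈ s, c j < 0) := by
      constructor
      · by_contra hno
        push_neg at hno
        have : ∑ i ∈ s, c i < 0 :=
          Finset.sum_neg (fun i hi => lt_of_le_of_ne (hno i hi) (hc i)) hsne
        omega
      · by_contra hno
        push_neg at hno
        have : 0 < ∑ i ∈ s, c i :=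
          Finset.sum_pos (fun i hi => lt_of_le_of_ne (hno i hi) (Ne.symm (hc i))) hsne
        omega
    obtain ⟨j₀, hj₀s, hj₀⟩ : ∃ j₀ ∈ s, c j₀ * B < 0 := by
      rcases lt_or_gt_of_ne hB0 with hBneg | hBpos
      · obtain ⟨j, hjs, hj⟩ := hposneg.1
        exact ⟨j, hjs, mul_neg_of_pos_of_neg hj hBneg⟩
      · obtain ⟨j, hjs, hj⟩ := hposneg.2
        exact ⟨j, hjs, mul_neg_of_neg_of_pos hj hBpos⟩
    set p : ℕ := B.natAbs with hpdef
    set q : ℕ := (c j₀).natAbs with hqdef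
    have hp : 0 < p := Int.natAbs_pos.2 hB0
    have hq : 0 < q := Int.natAbs_pos.2 (hc j₀)
    obtain ⟨y, w, hy, hw, h1, h2⟩ := rado_triple p q hp hq k χ
    set x : Fin m → ℕ := fun i => if i = j₀ then y + p*w else if i ∈ s then y else q*w
      with hxdef
    have hxpos : ∀ i, 0 < x i := by
      intro i
      simp only [hxdef]
      split
      · omega
      · split
        · exact hy
        · exact Nat.mul_pos hq hw
    have hcolor : ∀ i, χ (x i) = χ y := by
      intro i
      simp only [hxdef]
      split
      · exact h1.symm
      · split
        · rfl
        · exact h2.symm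
    refine ⟨x, hxpos, ?_, fun i j => (hcolor i).trans (hcolor j).symm⟩
    have hxj : ((x j₀ : ℕ) : ℤ) = (y : ℤ) + (p : ℤ) * w := by
      simp only [hxdef, if_pos rfl]; push_cast; ring
    have hxs : ∀ i ∈ s, i ≠ j₀ → ((x i : ℕ) : ℤ) = (y : ℤ) := by
      intro i his hij
      simp only [hxdef, if_neg hij, if_pos his]
    have hxc : ∀ i ∈ sᶜ, ((x i : ℕ) : ℤ) = (q : ℤ) * w := by
      intro i hic
      have his : i ∉ s := Finset.mem_compl.1 hic
      have hij : i ≠ j₀ := fun h => his (h ▸ hj₀s)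
      simp only [hxdef, if_neg hij, if_neg his]; push_cast; ring
    have hsum_c : ∑ i ∈ sᶜ, c i * (x i : ℤ) = B * ((q : ℤ) * w) := by
      rw [hB, Finset.sum_mul]
      exact Finset.sum_congr rfl fun i hi => by rw [hxc i hi]
    have herase : ∑ i ∈ s.erase j₀, c i = -(c j₀) := by
      have := Finset.sum_erase_add s c hj₀s
      omega
    have hsum_s : ∑ i ∈ s, c i * (x i : ℤ) = c j₀ * ((p : ℤ) * w) := by
      rw [← Finset.sum_erase_add s _ hj₀s, hxj]
      have : ∑ i ∈ s.erase j₀, c i * (x i : ℤ) = ∑ i ∈ s.erase j₀, c i * (y : ℤ) :=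
        Finset.sum_congr rfl fun i hi =>
          by rw [hxs i (Finset.mem_of_mem_erase hi) (Finset.ne_of_mem_erase hi)]
      rw [this, ← Finset.sum_mul, herase]
      ring
    have hkey : c j₀ * (p : ℤ) + B * (q : ℤ) = 0 := by
      rw [hpdef, hqdef]
      rcases mul_neg_iff.1 hj₀ with ⟨h1', h2'⟩ | ⟨h1', h2'⟩
      · rw [Int.ofNat_natAbs_of_nonpos h2'.le, Int.natAbs_of_nonneg h1'.le]; ring
      · rw [Int.natAbs_of_nonneg h2'.le, Int.ofNat_natAbs_of_nonpos h1'.le]; ring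
    calc ∑ i, c i * (x i : ℤ)
        = ∑ i ∈ s, c i * (x i : ℤ) + ∑ i ∈ sᶜ, c i * (x i : ℤ) :=
          (Finset.sum_add_sum_compl s _).symm
      _ = c j₀ * ((p : ℤ) * w) + B * ((q : ℤ) * w) := by rw [hsum_s, hsum_c]
      _ = (c j₀ * (p : ℤ) + B * (q : ℤ)) * w := by ring
      _ = 0 := by rw [hkey, zero_mul]
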